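/- Let H := { x ∈ ℝ^4 : x_1 ≥ 0 }, H' := { x ∈ ℝ^4 : 3x_1 ≤ x_2 + x_3 + x_4 } and P := H ∩ H', regarded as a subset of l∞^4. Then P is not hyperconvex (indeed, for p = (0,0,0,0), p' = (0,0,−2,2), p'' = (0,−2,0,2) ∈ P one has B(p,1) ∩ B(p',1) ∩ B(p'',1) ∩ P = ∅ although the pairwise l∞-distances of p, p', p'' are at most 2), and consequently P is not injective. -/

import Mathlib

open Set Metric

def IsInjectiveMetricSpace (X : Type) [MetricSpace X] : Prop :=
  ∀ (A B : Type) [MetricSpace A] [MetricSpace B], ∀ (i : A → B) (f : A → X),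
    Isometry i → LipschitzWith 1 f →
      ∃ g : B → X, LipschitzWith 1 g ∧ ∀ a, g (i a) = f a

def IsInjectiveSubset {n : ℕ} (S : Set (Fin n → ℝ)) : Prop :=
  IsInjectiveMetricSpace S

def IsHyperconvex (X : Type) [MetricSpace X] : Prop :=
  ∀ (ι : Type) (x : ι → X) (r : ι → ℝ),
    (∀ i j, dist (x i) (x j) ≤ r i + r j) →
      (⋂ i, {y | dist y (x i) ≤ r i}).Nonempty

def B3 : Type := Option (Fin 3)
def A3 : Type := Fin 3

instance : DecidableEq A3 := inferInstanceAs (DecidableEq (Fin 3))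
instance : Fintype A3 := inferInstanceAs (Fintype (Fin 3))

noncomputable def dB : B3 → B3 → ℝ
  | none, none => 0
  | none, some _ => 1
  | some _, none => 1
  | some i, some j => if i = j then 0 else 2

lemma dB_self (a : B3) : dB a a = 0 := by cases a <;> simp [dB]
lemma dB_comm (a b : B3) : dB a b = dB b a := by
  cases a <;> cases b <;> simp [dB, eq_comm]
lemma dB_le_two (a b : B3) : dB a b ≤ 2 := by
  cases a <;> cases b <;> simp only [dB] <;> try norm_num
  split <;> norm_num
lemma dB_ge_one (a b : B3) (h : a ≠ b) : 1 ≤ dB a b := by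
  cases a <;> cases b <;> simp_all [dB] <;> norm_num
  all_goals first | exact absurd rfl h | (split <;> [(subst_vars; exact absurd rfl h); simp_all])
lemma dB_nonneg (a b : B3) : 0 ≤ dB a b := by
  by_cases h : a = b
  · rw [h, dB_self]
  · linarith [dB_ge_one a b h]
lemma dB_eq_zero (a b : B3) (h : dB a b = 0) : a = b := by
  by_contra hne
  have := dB_ge_one a b hne
  linarith
lemma dB_triangle (a b c : B3) : dB a c ≤ dB a b + dB b c := by
  by_cases hac : a = c
  · rw [hac, dB_self]; exact add_nonneg (dB_nonneg _ _) (dB_nonneg _ _)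
  by_cases hab : a = b
  · rw [hab, dB_self]; linarith [dB_nonneg b c]
  by_cases hbc : b = c
  · rw [hbc, dB_self]; linarith [dB_nonneg a b]
  have := dB_ge_one a b hab
  have := dB_ge_one b c hbc
  have := dB_le_two a c
  linarith

noncomputable instance instB3 : MetricSpace B3 where
  dist := dB
  dist_self := dB_self
  dist_comm := dB_comm
  dist_triangle := dB_triangle
  eq_of_dist_eq_zero := dB_eq_zero _ _

noncomputable instance instA3 : MetricSpace A3 :=
  MetricSpace.induced (fun i => (some i : B3)) (fun _ _ h => Option.some_injective _ h) instB3

lemma dist_B3 (a b : B3) : dist a b = dB a b := rfl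
lemma dist_A3 (a b : A3) : dist a b = dB (some a) (some b) := rfl

noncomputable instance instB3' : MetricSpace (Option (Fin 3)) := instB3

lemma isometry_someA3 : Isometry (fun i : A3 => (some i : B3)) :=
  Isometry.of_dist_eq fun _ _ => rfl

theorem halfspace_intersection_not_injective (P : Set (Fin 4 → ℝ))
    (hP : P = {x | 0 ≤ x 0 ∧ 3 * x 0 ≤ x 1 + x 2 + x 3})
    (p p' p'' : Fin 4 → ℝ)
    (hp : p = ![0, 0, 0, 0]) (hp' : p' = ![0, 0, -2, 2]) (hp'' : p'' = ![0, -2, 0, 2]) :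
    (p ∈ P ∧ p' ∈ P ∧ p'' ∈ P) ∧
      (dist p p' ≤ 2 ∧ dist p p'' ≤ 2 ∧ dist p' p'' ≤ 2) ∧
      closedBall p 1 ∩ closedBall p' 1 ∩ closedBall p'' 1 ∩ P = ∅ ∧
      ¬ IsHyperconvex ↥P ∧ ¬ IsInjectiveSubset P := by
  have hpP : p ∈ P := by rw [hP, hp]; constructor <;> norm_num [Matrix.cons_val_two, Matrix.cons_val_three, Matrix.tail_cons, Matrix.head_cons]
  have hp'P : p' ∈ P := by rw [hP, hp']; constructor <;> norm_num [Matrix.cons_val_two, Matrix.cons_val_three, Matrix.tail_cons, Matrix.head_cons]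
  have hp''P : p'' ∈ P := by rw [hP, hp'']; constructor <;> norm_num [Matrix.cons_val_two, Matrix.cons_val_three, Matrix.tail_cons, Matrix.head_cons]
  have hd1 : dist p p' ≤ 2 := by
    rw [hp, hp', dist_pi_le_iff (by norm_num)]
    intro i; fin_cases i <;> simp [Real.dist_eq] <;> norm_num
  have hd2 : dist p p'' ≤ 2 := by
    rw [hp, hp'', dist_pi_le_iff (by norm_num)]
    intro i; fin_cases i <;> simp [Real.dist_eq] <;> norm_num
  have hd3 : dist p' p'' ≤ 2 := by
    rw [hp', hp'', dist_pi_le_iff (by norm_num)]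
    intro i; fin_cases i <;> simp [Real.dist_eq] <;> norm_num
  have hempty : closedBall p 1 ∩ closedBall p' 1 ∩ closedBall p'' 1 ∩ P = ∅ := by
    rw [eq_empty_iff_forall_notMem]
    rintro x ⟨⟨⟨h1, h2⟩, h3⟩, h4⟩
    rw [mem_closedBall] at h1 h2 h3
    rw [hP] at h4
    obtain ⟨h40, h41⟩ := h4
    have c1 : dist (x 1) (p'' 1) ≤ 1 := le_trans (dist_le_pi_dist x p'' 1) h3
    have c2 : dist (x 2) (p' 2) ≤ 1 := le_trans (dist_le_pi_dist x p' 2) h2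
    have c3 : dist (x 3) (p 3) ≤ 1 := le_trans (dist_le_pi_dist x p 3) h1
    rw [hp''] at c1; rw [hp'] at c2; rw [hp] at c3
    simp only [Real.dist_eq] at c1 c2 c3
    norm_num [Matrix.cons_val_two, Matrix.cons_val_three, Matrix.tail_cons, Matrix.head_cons] at c1 c2 c3
    rw [abs_le] at c1 c2 c3
    linarith [c1.2, c2.2, c3.2]
  have key : ∀ y : Fin 4 → ℝ, y ∈ P → dist y p ≤ 1 → dist y p' ≤ 1 → dist y p'' ≤ 1 → False := by
    intro y hy h1 h2 h3
    have : y ∈ closedBall p 1 ∩ closedBall p' 1 ∩ closedBall p'' 1 ∩ P :=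
      ⟨⟨⟨h1, h2⟩, h3⟩, hy⟩
    rw [hempty] at this
    exact this
  refine ⟨⟨hpP, hp'P, hp''P⟩, ⟨hd1, hd2, hd3⟩, hempty, ?_, ?_⟩
  · intro h
    have hcond : ∀ i j : Fin 3,
        dist ((![⟨p, hpP⟩, ⟨p', hp'P⟩, ⟨p'', hp''P⟩] : Fin 3 → ↥P) i)
          ((![⟨p, hpP⟩, ⟨p', hp'P⟩, ⟨p'', hp''P⟩] : Fin 3 → ↥P) j) ≤ (fun _ : Fin 3 => (1:ℝ)) i + (fun _ : Fin 3 => (1:ℝ)) j := by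
      intro i j
      fin_cases i <;> fin_cases j <;>
        simp only [Subtype.dist_eq, Fin.zero_eta, Fin.mk_one, Fin.reduceFinMk,
          Matrix.cons_val_zero, Matrix.cons_val_one, Matrix.head_cons, Matrix.cons_val_two,
          Matrix.tail_cons, Fin.isValue, dist_self] <;>
        first
          | linarith
          | (rw [dist_comm]; linarith)
    obtain ⟨y, hy⟩ := h (Fin 3) ![⟨p, hpP⟩, ⟨p', hp'P⟩, ⟨p'', hp''P⟩] (fun _ => 1) hcond
    rw [mem_iInter] at hy
    have g0 := hy 0
    have g1 := hy 1
    have g2 := hy 2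
    simp only [mem_setOf_eq, Subtype.dist_eq] at g0 g1 g2
    simp only [Matrix.cons_val_zero, Matrix.cons_val_one, Matrix.head_cons,
      Matrix.cons_val_two, Matrix.tail_cons] at g0 g1 g2
    exact key y.1 y.2 g0 g1 g2
  · intro h
    have key2 : ∀ a b : Fin 3,
        dist ((![⟨p, hpP⟩, ⟨p', hp'P⟩, ⟨p'', hp''P⟩] : Fin 3 → ↥P) a)
          ((![⟨p, hpP⟩, ⟨p', hp'P⟩, ⟨p'', hp''P⟩] : Fin 3 → ↥P) b) ≤ 2 := by
      intro a b
      fin_cases a <;> fin_cases b <;>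
        simp only [Subtype.dist_eq, Fin.zero_eta, Fin.mk_one, Fin.reduceFinMk,
          Matrix.cons_val_zero, Matrix.cons_val_one, Matrix.head_cons, Matrix.cons_val_two,
          Matrix.tail_cons, Fin.isValue, dist_self] <;>
        first
          | linarith
          | (rw [dist_comm]; linarith)
    have hf : LipschitzWith 1 (fun i : A3 => (![⟨p, hpP⟩, ⟨p', hp'P⟩, ⟨p'', hp''P⟩] : Fin 3 → ↥P) i) := by
      apply LipschitzWith.of_dist_le_mul
      intro a b
      rw [NNReal.coe_one, one_mul]
      by_cases hab : a = b
      · subst hab; rw [dist_self]; exact dist_nonneg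
      · have hba : dB (some a) (some b) = 2 := by
          show (if a = b then (0:ℝ) else 2) = 2
          simp [hab]
        rw [dist_A3, hba]
        exact key2 a b
    obtain ⟨g, hg, hgi⟩ := h A3 B3 (fun i => some i) _ isometry_someA3 hf
    have hb : ∀ k : A3, dist (g none) (g (some k)) ≤ 1 := by
      intro k
      have h1 := hg.dist_le_mul none (some k)
      have hdnk : dist (none : B3) (some k) = (1:ℝ) := rfl
      rw [NNReal.coe_one, one_mul] at h1
      exact h1.trans hdnk.le
    have e0 := hb (0 : Fin 3); have e1 := hb (1 : Fin 3); have e2 := hb (2 : Fin 3)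
    rw [hgi (0 : Fin 3)] at e0; rw [hgi (1 : Fin 3)] at e1; rw [hgi (2 : Fin 3)] at e2
    simp only [Subtype.dist_eq, Matrix.cons_val_zero, Matrix.cons_val_one, Matrix.head_cons,
      Matrix.cons_val_two, Matrix.tail_cons] at e0 e1 e2
    exact key (g none).1 (g none).2 e0 e1 e2
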